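/- Consider the one-variable steady-state function f(x) = x Π_{i=2}^{s} (c_i + γ_i x)^{α_i} defined on an interval D ⊆ (0,∞) where all factors c_i + γ_i x are positive, with γ_i, α_i nonzero reals. If the equation f(x) = K has a root of multiplicity at least two in D for some K > 0, then there exists a vector ρ ∈ ℝ_{>0}^s with Σ_{i=1}^s β_i ρ_i = 0, where β_1 := 1 and β_i := γ_i α_i for i ≥ 2; consequently the vector β has at least one positive and at least one negative coordinate. -/

import Mathlib

open Finset in
/-- For the one-variable steady-state function
`f(x) = x ∏_{i≠0} (cᵢ + γᵢ x)^{αᵢ}` (here written with `c₀ = 0`, `γ₀ = α₀ = 1`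
so `f(x) = ∏ᵢ (cᵢ + γᵢ x)^{αᵢ}` via real powers) on the region `D` where `x > 0`
and all `cᵢ + γᵢ x > 0`: if `f(x) = K` has a root of multiplicity at least two
in `D` for some `K > 0` (encoded as `f x = K` and `f' x = 0`), then there is a
positive vector `ρ` with `∑ βᵢ ρᵢ = 0` where `βᵢ = γᵢ αᵢ`; consequently `β`
has at least one positive and at least one negative coordinate. -/
theorem multiple_root_forces_mixed_signs (s : ℕ) (hs : 2 ≤ s)
    (α γ c : Fin s → ℝ)
    (hα0 : α ⟨0, by omega⟩ = 1) (hγ0 : γ ⟨0, by omega⟩ = 1)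
    (hc0 : c ⟨0, by omega⟩ = 0)
    (hα : ∀ i, α i ≠ 0) (hγ : ∀ i, γ i ≠ 0)
    (hyp : ∃ K : ℝ, 0 < K ∧ ∃ x : ℝ, 0 < x ∧ (∀ i, 0 < c i + γ i * x) ∧
      (∏ i, (c i + γ i * x) ^ (α i)) = K ∧
      deriv (fun t : ℝ => ∏ i, (c i + γ i * t) ^ (α i)) x = 0) :
    (∃ ρ : Fin s → ℝ, (∀ i, 0 < ρ i) ∧ ∑ i, (γ i * α i) * ρ i = 0) ∧
    (∃ i, 0 < γ i * α i) ∧ (∃ i, γ i * α i < 0) := by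
  obtain ⟨K, hK, x, hx, hpos, hval, hder⟩ := hyp
  set ρ : Fin s → ℝ := fun i => (c i + γ i * x)⁻¹ with hρ
  have hρpos : ∀ i, 0 < ρ i := fun i => inv_pos.2 (hpos i)
  -- compute the derivative
  have hd : ∀ i : Fin s, HasDerivAt (fun t : ℝ => (c i + γ i * t) ^ (α i))
      (γ i * (α i) * (c i + γ i * x) ^ (α i - 1)) x := by
    intro i
    have h1 : HasDerivAt (fun t : ℝ => c i + γ i * t) (γ i) x := by
      simpa using (hasDerivAt_id x).const_mul (γ i) |>.const_add (c i)
    simpa [mul_comm, mul_assoc] using h1.rpow_const (Or.inl (ne_of_gt (hpos i)))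
  have hD : HasDerivAt (fun t : ℝ => ∏ i, (c i + γ i * t) ^ (α i))
      (∑ i, (∏ j ∈ Finset.univ.erase i, (c j + γ j * x) ^ (α j)) •
        (γ i * (α i) * (c i + γ i * x) ^ (α i - 1))) x :=
    HasDerivAt.fun_finsetProd (fun i _ => hd i)
  have hderval := hD.deriv
  rw [hder] at hderval
  have hterm : ∀ i : Fin s,
      (∏ j ∈ Finset.univ.erase i, (c j + γ j * x) ^ (α j)) •
        (γ i * (α i) * (c i + γ i * x) ^ (α i - 1))
      = K * ((γ i * α i) * ρ i) := by
    intro i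
    have h1 : (c i + γ i * x) ^ (α i - 1)
        = (c i + γ i * x) ^ (α i) * (c i + γ i * x)⁻¹ := by
      rw [Real.rpow_sub (hpos i), Real.rpow_one, div_eq_mul_inv]
    have h2 : (∏ j ∈ Finset.univ.erase i, (c j + γ j * x) ^ (α j)) *
        (c i + γ i * x) ^ (α i) = K := by
      rw [Finset.prod_erase_mul _ _ (Finset.mem_univ i)]; exact hval
    rw [smul_eq_mul, h1]
    calc (∏ j ∈ Finset.univ.erase i, (c j + γ j * x) ^ (α j)) *
          (γ i * α i * ((c i + γ i * x) ^ (α i) * (c i + γ i * x)⁻¹))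
        = ((∏ j ∈ Finset.univ.erase i, (c j + γ j * x) ^ (α j)) *
          (c i + γ i * x) ^ (α i)) * ((γ i * α i) * (c i + γ i * x)⁻¹) := by ring
      _ = K * ((γ i * α i) * ρ i) := by rw [h2]
  rw [Finset.sum_congr rfl (fun i _ => hterm i), ← Finset.mul_sum] at hderval
  have hsum : ∑ i, (γ i * α i) * ρ i = 0 := by
    rcases mul_eq_zero.1 hderval.symm with h | h
    · exact absurd h (ne_of_gt hK)
    · exact h
  refine ⟨⟨ρ, hρpos, hsum⟩, ⟨⟨0, by omega⟩, by rw [hα0, hγ0]; norm_num⟩, ?_⟩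
  by_contra h
  push_neg at h
  have hpos' : ∀ i, 0 < (γ i * α i) * ρ i := by
    intro i
    have hne : γ i * α i ≠ 0 := mul_ne_zero (hγ i) (hα i)
    have : 0 < γ i * α i := lt_of_le_of_ne (h i) (Ne.symm hne)
    exact mul_pos this (hρpos i)
  have : 0 < ∑ i, (γ i * α i) * ρ i :=
    Finset.sum_pos (fun i _ => hpos' i) ⟨⟨0, by omega⟩, Finset.mem_univ _⟩
  linarith
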